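/- arXiv:hep-th/0703279 — 3 statements merged into one kernel-verified Lean document; each statement's English description precedes it below -/
import Mathlib

section
/- Let B be a commutative ring, c ≥ 1, f₁,…,f_c ∈ B, and let C be a B-module equipped with a family of B-linear endomorphisms d_γ : C → C indexed by multi-indices γ ∈ ℕ^c satisfying: (i) d_o ∘ d_o = 0; (ii) d_o ∘ d_{ε_i} + d_{ε_i} ∘ d_o = −f_i · id_C for each i; and (iii) for every γ with |γ| ≥ 2, d_o ∘ d_γ + d_γ ∘ d_o = −Σ_{α+β=γ, α≠o, β≠o} d_α ∘ d_β. Let E be the B-module of finitely supported functions u : ℕ^c → C, and define the B-linear operator 𝒟 : E → E by (𝒟u)(β) = Σ_{γ ∈ ℕ^c} d_γ(u(β+γ)) (a finite sum since u is finitely supported). Then 𝒟 ∘ 𝒟 = −F, where F : E → E is the B-linear operator (Fu)(β) = Σ_{i=1}^{c} f_i · u(β+ε_i). -/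
/- STATEMENT 1: given a system of higher homotopies `(d_γ)_{γ ∈ ℕ^c}` for `f₁,…,f_c`
on a `B`-module `C`, the operator `𝒟` on the module `E` of finitely supported functions
`u : ℕ^c → C` (a model for `C ⊗_B D` with `D` the divided powers algebra), defined by
`(𝒟u)(β) = Σ_γ d_γ(u(β+γ))`, satisfies `𝒟∘𝒟 = −F` where `(Fu)(β) = Σᵢ fᵢ·u(β+εᵢ)`. -/

theorem stmt1 {B : Type*} [CommRing B] (c : ℕ) (hc : 1 ≤ c) (f : Fin c → B)
    {C : Type*} [AddCommGroup C] [Module B C]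
    (d : (Fin c → ℕ) → C →ₗ[B] C)
    -- (i) d_o ∘ d_o = 0
    (h0 : d 0 ∘ₗ d 0 = 0)
    -- (ii) d_o ∘ d_{ε_i} + d_{ε_i} ∘ d_o = −f_i · id
    (h1 : ∀ i : Fin c,
      d 0 ∘ₗ d (Pi.single i 1) + d (Pi.single i 1) ∘ₗ d 0
        = (-(f i)) • (LinearMap.id : C →ₗ[B] C))
    -- (iii) for |γ| ≥ 2: d_o ∘ d_γ + d_γ ∘ d_o = −Σ_{α+β=γ, α,β≠o} d_α ∘ d_β
    (h2 : ∀ γ : Fin c → ℕ, 2 ≤ ∑ i, γ i →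
      d 0 ∘ₗ d γ + d γ ∘ₗ d 0 =
        -∑ α ∈ (Finset.Iic γ).filter (fun α => α ≠ 0 ∧ α ≠ γ), d α ∘ₗ d (γ - α))
    -- E = finitely supported functions ℕ^c → C; 𝒟 and F are the operators described above
    (𝒟 F : ((Fin c → ℕ) →₀ C) →ₗ[B] ((Fin c → ℕ) →₀ C))
    (h𝒟 : ∀ (u : (Fin c → ℕ) →₀ C) (β : Fin c → ℕ),
      𝒟 u β = ∑ᶠ γ : Fin c → ℕ, d γ (u (β + γ)))
    (hF : ∀ (u : (Fin c → ℕ) →₀ C) (β : Fin c → ℕ),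
      F u β = ∑ i : Fin c, f i • u (β + Pi.single i 1)) :
    𝒟 ∘ₗ 𝒟 = -F := by
  classical
  have singleNe : ∀ i : Fin c, (Pi.single i 1 : Fin c → ℕ) ≠ 0 := by
    intro i h
    have := congrFun h i
    simp at this
  have singleSum : ∀ i : Fin c, ∑ j, (Pi.single i 1 : Fin c → ℕ) j = 1 := by
    intro i
    simp [Finset.sum_pi_single']
  -- Key convolution identity
  have key : ∀ σ : Fin c → ℕ,
      (∑ α ∈ Finset.Iic σ, d α ∘ₗ d (σ - α))
        = -∑ i : Fin c,
            (if σ = Pi.single i 1 then (f i) • (LinearMap.id : C →ₗ[B] C) else 0) := by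
    intro σ
    rcases eq_or_ne σ 0 with rfl | hσ
    · have hIic : Finset.Iic (0 : Fin c → ℕ) = {0} := by
        ext α
        simp [Finset.mem_Iic, nonpos_iff_eq_zero]
      have hne : ∀ i : Fin c, ¬((0 : Fin c → ℕ) = Pi.single i 1) :=
        fun i h => singleNe i h.symm
      rw [hIic]
      simp only [Finset.sum_singleton, tsub_self, hne, if_false, Finset.sum_const_zero,
        neg_zero, h0]
    · -- split off the endpoints 0 and σ
      have hsplit := Finset.sum_filter_add_sum_filter_not (Finset.Iic σ)
        (fun α => α ≠ 0 ∧ α ≠ σ) (fun α => d α ∘ₗ d (σ - α))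
      have hnot : (Finset.Iic σ).filter (fun α => ¬(α ≠ 0 ∧ α ≠ σ)) = {0, σ} := by
        ext α
        simp only [Finset.mem_filter, Finset.mem_Iic, Finset.mem_insert, Finset.mem_singleton,
          not_and_or, not_ne_iff]
        constructor
        · rintro ⟨-, h | h⟩
          · exact Or.inl h
          · exact Or.inr h
        · rintro (rfl | rfl)
          · exact ⟨zero_le, Or.inl rfl⟩
          · exact ⟨le_rfl, Or.inr rfl⟩
      rw [hnot, Finset.sum_pair (Ne.symm hσ), tsub_zero, tsub_self] at hsplit
    -- case on |σ|
      rcases lt_or_ge (∑ i, σ i) 2 with hlt | hge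
      · interval_cases h : (∑ i, σ i)
        · exact absurd (funext fun i =>
            (Finset.sum_eq_zero_iff.mp h) i (Finset.mem_univ i)) hσ
        · -- |σ| = 1 : σ = ε_i for some i
          obtain ⟨i, rfl⟩ : ∃ i, σ = Pi.single i 1 := by
            obtain ⟨i, hi⟩ : ∃ i, σ i ≠ 0 := by
              by_contra h'
              push_neg at h'
              exact hσ (funext h')
            have hsum : σ i + ∑ j ∈ Finset.univ.erase i, σ j = 1 := by
              rw [Finset.add_sum_erase _ _ (Finset.mem_univ i)]
              exact h
            have hi1 : σ i = 1 := by omega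
            have hrest : ∀ j ∈ Finset.univ.erase i, σ j = 0 :=
              Finset.sum_eq_zero_iff.mp (by omega)
            refine ⟨i, funext fun j => ?_⟩
            rcases eq_or_ne j i with rfl | hj
            · simpa [Pi.single_apply] using hi1
            · have := hrest j (Finset.mem_erase.mpr ⟨hj, Finset.mem_univ j⟩)
              simp [Pi.single_apply, hj, this]
          -- the interior is empty
          have hempty : (Finset.Iic (Pi.single i 1 : Fin c → ℕ)).filter
              (fun α => α ≠ 0 ∧ α ≠ Pi.single i 1) = ∅ := by
            rw [Finset.filter_eq_empty_iff]
            intro α hα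
            have hle : α ≤ Pi.single i 1 := Finset.mem_Iic.mp hα
            rintro ⟨hα0, hασ⟩
            rcases Nat.eq_zero_or_pos (α i) with h0i | h1i
            · exact hα0 (funext fun j => by
                rcases eq_or_ne j i with rfl | hj
                · exact h0i
                · have := hle j
                  simpa [Pi.single_apply, hj] using this)
            · refine hασ (funext fun j => ?_)
              rcases eq_or_ne j i with h | hj
              · have h2 : α i ≤ 1 := by simpa using hle i
                rw [h, Pi.single_eq_same]
                omega
              · have := hle j
                simpa [Pi.single_apply, hj] using this
          rw [hempty, Finset.sum_empty, zero_add] at hsplit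
          rw [← hsplit, h1 i]
          have hinj : ∀ j : Fin c, (Pi.single i 1 : Fin c → ℕ) = Pi.single j 1 → i = j := by
            intro j h
            by_contra hij
            have := congrFun h i
            rw [Pi.single_eq_same, Pi.single_apply, if_neg hij] at this
            exact one_ne_zero this
          rw [Finset.sum_eq_single i
            (fun j _ hji => if_neg fun h => hji ((hinj j h).symm))
            (fun h => absurd (Finset.mem_univ i) h), if_pos rfl, neg_smul]
      · -- |σ| ≥ 2
        have hzero : ∀ i : Fin c, ¬(σ = Pi.single i 1) := by
          intro i h
          rw [h] at hge
          rw [singleSum i] at hge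
          omega
        rw [h2 σ hge] at hsplit
        simp only [hzero, if_false, Finset.sum_const_zero, neg_zero]
        rw [← hsplit]
        abel
  -- Main computation
  apply LinearMap.ext
  intro u
  apply Finsupp.ext
  intro β
  simp only [LinearMap.comp_apply, LinearMap.neg_apply, Finsupp.coe_neg, Pi.neg_apply]
  set N : Fin c → ℕ := u.support.sup id with hN
  have hu : ∀ v : Fin c → ℕ, u v ≠ 0 → v ≤ N := by
    intro v hv
    exact Finset.le_sup (f := id) (Finsupp.mem_support_iff.mpr hv)
  -- inner rewriting
  have hinner : ∀ γ : Fin c → ℕ,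
      (𝒟 u) (β + γ) = ∑ δ ∈ Finset.Iic N, d δ (u (β + γ + δ)) := by
    intro γ
    rw [h𝒟]
    apply finsum_eq_sum_of_support_subset
    intro δ hδ
    simp only [Function.mem_support] at hδ
    have : u (β + γ + δ) ≠ 0 := by
      intro h
      rw [h] at hδ
      simp at hδ
    have hle := hu _ this
    have : δ ≤ N := le_trans (le_add_self) hle
    simpa [Finset.mem_Iic] using this
  have houter : (𝒟 (𝒟 u)) β = ∑ γ ∈ Finset.Iic N, d γ ((𝒟 u) (β + γ)) := by
    rw [h𝒟]
    apply finsum_eq_sum_of_support_subset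
    intro γ hγ
    simp only [Function.mem_support] at hγ
    have h1' : (𝒟 u) (β + γ) ≠ 0 := by
      intro h
      rw [h] at hγ
      simp at hγ
    rw [hinner γ] at h1'
    obtain ⟨δ, _, hδ⟩ := Finset.exists_ne_zero_of_sum_ne_zero h1'
    have : u (β + γ + δ) ≠ 0 := by
      intro h
      rw [h] at hδ
      simp at hδ
    have hle := hu _ this
    have : γ ≤ N := le_trans (le_trans le_add_self (le_add_right le_rfl)) hle
    simpa [Finset.mem_Iic] using this
  rw [houter]
  have hg0 : ∀ γ δ : Fin c → ℕ, ¬(γ + δ ≤ N) → d γ (d δ (u (β + γ + δ))) = 0 := by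
    intro γ δ h
    have : u (β + γ + δ) = 0 := by
      by_contra h'
      have := hu _ h'
      exact h (le_trans le_add_self (by rwa [add_assoc] at this))
    rw [this]
    simp
  calc
    ∑ γ ∈ Finset.Iic N, d γ ((𝒟 u) (β + γ))
        = ∑ γ ∈ Finset.Iic N, ∑ δ ∈ Finset.Iic N, d γ (d δ (u (β + γ + δ))) := by
          refine Finset.sum_congr rfl fun γ _ => ?_
          rw [hinner γ, map_sum]
    _ = ∑ p ∈ (Finset.Iic N ×ˢ Finset.Iic N).filter (fun p => p.1 + p.2 ≤ N),
          d p.1 (d p.2 (u (β + p.1 + p.2))) := by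
          rw [← Finset.sum_product']
          exact (Finset.sum_filter_of_ne (by
            intro p _ hp
            by_contra h
            exact hp (hg0 p.1 p.2 h))).symm
    _ = ∑ x ∈ (Finset.Iic N).sigma (fun σ => Finset.Iic σ),
          d x.2 (d (x.1 - x.2) (u (β + x.2 + (x.1 - x.2)))) := by
          refine (Finset.sum_nbij' (fun x => (x.2, x.1 - x.2))
            (fun p => ⟨p.1 + p.2, p.1⟩) ?_ ?_ ?_ ?_ ?_).symm
          · intro x hx
            simp only [Finset.mem_sigma, Finset.mem_Iic] at hx
            simp only [Finset.mem_filter, Finset.mem_product, Finset.mem_Iic]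
            refine ⟨⟨le_trans hx.2 hx.1, le_trans tsub_le_self hx.1⟩, ?_⟩
            rw [add_tsub_cancel_of_le hx.2]
            exact hx.1
          · intro p hp
            simp only [Finset.mem_filter, Finset.mem_product, Finset.mem_Iic] at hp
            simp only [Finset.mem_sigma, Finset.mem_Iic]
            exact ⟨hp.2, le_add_right le_rfl⟩
          · intro x hx
            simp only [Finset.mem_sigma, Finset.mem_Iic] at hx
            simp [add_tsub_cancel_of_le hx.2]
          · intro p _
            simp [add_tsub_cancel_left]
          · intro x _
            rfl
    _ = ∑ σ ∈ Finset.Iic N, ∑ α ∈ Finset.Iic σ, d α (d (σ - α) (u (β + σ))) := by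
          rw [Finset.sum_sigma]
          refine Finset.sum_congr rfl fun σ _ => Finset.sum_congr rfl fun α hα => ?_
          rw [add_assoc, add_tsub_cancel_of_le (Finset.mem_Iic.mp hα)]
    _ = ∑ σ ∈ Finset.Iic N,
          (∑ α ∈ Finset.Iic σ, d α ∘ₗ d (σ - α)) (u (β + σ)) := by
          refine Finset.sum_congr rfl fun σ _ => ?_
          rw [LinearMap.sum_apply]
          rfl
    _ = ∑ σ ∈ Finset.Iic N, -∑ i : Fin c,
          (if σ = Pi.single i 1 then f i • u (β + σ) else 0) := by
          refine Finset.sum_congr rfl fun σ _ => ?_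
          rw [key σ]
          simp only [LinearMap.neg_apply, LinearMap.sum_apply]
          congr 1
          refine Finset.sum_congr rfl fun i _ => ?_
          split <;> simp
    _ = -∑ i : Fin c, ∑ σ ∈ Finset.Iic N,
          (if σ = Pi.single i 1 then f i • u (β + σ) else 0) := by
          rw [Finset.sum_neg_distrib]
          congr 1
          exact Finset.sum_comm
    _ = -(F u) β := by
          rw [hF]
          congr 1
          refine Finset.sum_congr rfl fun i _ => ?_
          rw [Finset.sum_ite_eq' (Finset.Iic N) (Pi.single i 1) (fun σ => f i • u (β + σ))]
          split
          · rfl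
          · rename_i h
            have : u (β + Pi.single i 1) = 0 := by
              by_contra h'
              exact h (Finset.mem_Iic.mpr (le_trans le_add_self (hu _ h')))
            rw [this, smul_zero]
end

section
/- Let B be a commutative ring, W ∈ B, and C a B-module. Let (d_j)_{j∈ℕ} be a family of B-linear endomorphisms of C with d_j = 0 for all but finitely many j, satisfying: (i) d₀ ∘ d₀ = 0; (ii) d₀ ∘ d₁ + d₁ ∘ d₀ = −W · id_C; and (iii) for every n ≥ 2, d₀ ∘ d_n + d_n ∘ d₀ = −Σ_{j+k=n, j≥1, k≥1} d_j ∘ d_k. Then the B-linear map p = Σ_{j∈ℕ} (−1)^j d_j satisfies p ∘ p = W · id_C. -/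
/- STATEMENT 2 (hypersurface case c = 1): given endomorphisms `(d_j)_{j∈ℕ}` of `C`,
zero for all but finitely many `j`, satisfying the higher-homotopy relations for a
single element `W`, the map `p = Σ_j (−1)^j d_j` satisfies `p ∘ p = W · id`. -/


private lemma sum_comp' {B : Type*} [CommRing B] {C : Type*} [AddCommGroup C] [Module B C]
    (s : Finset ℕ) (f : ℕ → C →ₗ[B] C) (g : C →ₗ[B] C) :
    (∑ i ∈ s, f i) ∘ₗ g = ∑ i ∈ s, f i ∘ₗ g := by
  ext x; simp [LinearMap.sum_apply]

private lemma comp_sum' {B : Type*} [CommRing B] {C : Type*} [AddCommGroup C] [Module B C]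
    (s : Finset ℕ) (f : ℕ → C →ₗ[B] C) (g : C →ₗ[B] C) :
    g ∘ₗ (∑ i ∈ s, f i) = ∑ i ∈ s, g ∘ₗ f i := by
  ext x; simp [LinearMap.sum_apply]

theorem stmt2 {B : Type*} [CommRing B] (W : B)
    {C : Type*} [AddCommGroup C] [Module B C]
    (d : ℕ → C →ₗ[B] C)
    (hfin : {j : ℕ | d j ≠ 0}.Finite)
    -- (i)
    (h0 : d 0 ∘ₗ d 0 = 0)
    -- (ii)
    (h1 : d 0 ∘ₗ d 1 + d 1 ∘ₗ d 0 = (-W) • (LinearMap.id : C →ₗ[B] C))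
    -- (iii)
    (h2 : ∀ n : ℕ, 2 ≤ n →
      d 0 ∘ₗ d n + d n ∘ₗ d 0 = -∑ j ∈ Finset.Ioo 0 n, d j ∘ₗ d (n - j)) :
    (∑ᶠ j : ℕ, ((-1 : B) ^ j) • d j) ∘ₗ (∑ᶠ j : ℕ, ((-1 : B) ^ j) • d j)
      = W • (LinearMap.id : C →ₗ[B] C) := by
  obtain ⟨N, hN1, hN⟩ : ∃ N : ℕ, 1 ≤ N ∧ ∀ j, N ≤ j → d j = 0 := by
    refine ⟨max (hfin.toFinset.sup id + 1) 1, le_max_right _ _, fun j hj => ?_⟩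
    by_contra h
    have hj' : j ∈ hfin.toFinset := hfin.mem_toFinset.2 h
    have h1' := Finset.le_sup (f := id) hj'
    simp only [id_eq] at h1'
    have h2' := le_trans (le_max_left (hfin.toFinset.sup id + 1) 1) hj
    omega
  have hp : (∑ᶠ j : ℕ, ((-1 : B) ^ j) • d j)
      = ∑ j ∈ Finset.range N, ((-1 : B) ^ j) • d j := by
    apply finsum_eq_sum_of_support_subset
    intro j hj
    simp only [Finset.coe_range, Set.mem_Iio]
    by_contra hjN
    push_neg at hjN
    apply hj
    simp [hN j hjN]
  rw [hp, sum_comp' _ _ _]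
  have key : ∀ j ∈ Finset.range N,
      (((-1 : B) ^ j) • d j) ∘ₗ (∑ k ∈ Finset.range N, ((-1 : B) ^ k) • d k)
      = ∑ k ∈ Finset.range N, ((-1 : B) ^ (j + k)) • (d j ∘ₗ d k) := by
    intro j _
    rw [comp_sum' _ _ _]
    refine Finset.sum_congr rfl fun k _ => ?_
    rw [LinearMap.comp_smul, LinearMap.smul_comp, smul_smul, mul_comm, pow_add]
  rw [Finset.sum_congr rfl key]
  set F : ℕ → ℕ → (C →ₗ[B] C) := fun j k => ((-1 : B) ^ (j + k)) • (d j ∘ₗ d k) with hF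
  -- step A: extend to the triangular region
  have hA : (∑ j ∈ Finset.range N, ∑ k ∈ Finset.range N, F j k)
      = ∑ m ∈ Finset.range (2 * N), ∑ k ∈ Finset.range (2 * N - m), F m k := by
    rw [show (2 * N) = N + N by ring, Finset.sum_range_add]
    have hz : ∀ m ∈ Finset.range N,
        ∑ k ∈ Finset.range (N + N - (N + m)), F (N + m) k = 0 := by
      intro m _
      refine Finset.sum_eq_zero fun k _ => ?_
      simp [hF, hN (N + m) (by omega)]
    rw [Finset.sum_congr rfl hz, Finset.sum_const, smul_zero, add_zero]
    refine Finset.sum_congr rfl fun m hm => ?_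
    rw [Finset.mem_range] at hm
    rw [show N + N - m = N + (N - m) by omega, Finset.sum_range_add]
    have hz2 : ∀ k ∈ Finset.range (N - m), F m (N + k) = 0 := by
      intro k _
      simp [hF, hN (N + k) (by omega)]
    rw [Finset.sum_congr rfl hz2, Finset.sum_const, smul_zero, add_zero]
  rw [hA, ← Finset.sum_range_diag_flip (2 * N) F]
  -- each diagonal sum
  have hterm : ∀ n : ℕ, (∑ k ∈ Finset.range (n + 1), F k (n - k))
      = if n = 1 then W • (LinearMap.id : C →ₗ[B] C) else 0 := by
    intro n
    have hdiag : (∑ k ∈ Finset.range (n + 1), F k (n - k))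
        = ((-1 : B) ^ n) • ∑ k ∈ Finset.range (n + 1), d k ∘ₗ d (n - k) := by
      rw [Finset.smul_sum]
      refine Finset.sum_congr rfl fun k hk => ?_
      rw [Finset.mem_range] at hk
      simp only [hF]
      congr 2
      omega
    rw [hdiag]
    match n with
    | 0 => simp [h0]
    | 1 =>
      rw [if_pos rfl]
      have hs1 : ∑ k ∈ Finset.range (1 + 1), d k ∘ₗ d (1 - k)
          = d 0 ∘ₗ d 1 + d 1 ∘ₗ d 0 := by
        rw [Finset.sum_range_succ, Finset.sum_range_succ, Finset.sum_range_zero, zero_add]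
      rw [hs1, h1, smul_smul, pow_one, neg_mul_neg, one_mul]
    | (m + 2) =>
      rw [if_neg (by omega)]
      set n := m + 2 with hn
      have hn2 : 2 ≤ n := by omega
      have hs : Finset.range (n + 1) = insert 0 (insert n (Finset.Ioo 0 n)) := by
        ext k
        simp only [Finset.mem_range, Finset.mem_insert, Finset.mem_Ioo]
        omega
      rw [hs, Finset.sum_insert (by simp), Finset.sum_insert (by simp)]
      rw [Nat.sub_self, Nat.sub_zero, ← add_assoc, h2 n hn2, neg_add_cancel, smul_zero]
  rw [Finset.sum_congr rfl fun n _ => hterm n, Finset.sum_ite_eq' (Finset.range (2 * N)) 1,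
    if_pos (by rw [Finset.mem_range]; omega)]
end

section
/- Let k be a commutative ring, B = k[x₀,x₁,x₂,x₃,x₄], and let p, g, q be the 8×8 matrices over B defined below. Then g · g = s · p + p · s where s = −x₄² · q; that is, the composition g∘g is null-homotopic with respect to the matrix factorization p. Consequently the product m₂(g,g) of the open string state g with itself vanishes in the BRST cohomology. -/
/- STATEMENT 12: `g·g = s·p + p·s` with `s = −x₄²·q`, i.e. `g∘g` is null-homotopic with
respect to the matrix factorization `p`, so `m₂(g,g) = 0` in BRST cohomology. -/

noncomputable section

open MvPolynomial

def a0 (k : Type*) [CommRing k] : MvPolynomial (Fin 5) k := X 0 + X 1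
def a1 (k : Type*) [CommRing k] : MvPolynomial (Fin 5) k := X 2 + X 3
def a2 (k : Type*) [CommRing k] : MvPolynomial (Fin 5) k := X 4
def b0 (k : Type*) [CommRing k] : MvPolynomial (Fin 5) k :=
  X 0 ^ 4 - X 0 ^ 3 * X 1 + X 0 ^ 2 * X 1 ^ 2 - X 0 * X 1 ^ 3 + X 1 ^ 4
def b1 (k : Type*) [CommRing k] : MvPolynomial (Fin 5) k :=
  X 2 ^ 4 - X 2 ^ 3 * X 3 + X 2 ^ 2 * X 3 ^ 2 - X 2 * X 3 ^ 3 + X 3 ^ 4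
def b2 (k : Type*) [CommRing k] : MvPolynomial (Fin 5) k := X 4 ^ 4

def pmat (k : Type*) [CommRing k] : Matrix (Fin 8) (Fin 8) (MvPolynomial (Fin 5) k) :=
  !![0,    a0 k,  a1 k,  a2 k,  0,     0,     0,     0;
     b0 k, 0,     0,     0,     -a1 k, -a2 k, 0,     0;
     b1 k, 0,     0,     0,     a0 k,  0,     -a2 k, 0;
     b2 k, 0,     0,     0,     0,     a0 k,  a1 k,  0;
     0,    -b1 k, b0 k,  0,     0,     0,     0,     a2 k;
     0,    -b2 k, 0,     b0 k,  0,     0,     0,     -a1 k;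
     0,    0,     -b2 k, b1 k,  0,     0,     0,     a0 k;
     0,    0,     0,     0,     b2 k,  -b1 k, b0 k,  0]

def gmat (k : Type*) [CommRing k] : Matrix (Fin 8) (Fin 8) (MvPolynomial (Fin 5) k) :=
  !![0,          0,       0,       1, 0,          0,  0,  0;
     0,          0,       0,       0, 0,          -1, 0,  0;
     0,          0,       0,       0, 0,          0,  -1, 0;
     -(X 4 ^ 3), 0,       0,       0, 0,          0,  0,  0;
     0,          0,       0,       0, 0,          0,  0,  1;
     0,          X 4 ^ 3, 0,       0, 0,          0,  0,  0;
     0,          0,       X 4 ^ 3, 0, 0,          0,  0,  0;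
     0,          0,       0,       0, -(X 4 ^ 3), 0,  0,  0]

def qmat (k : Type*) [CommRing k] : Matrix (Fin 8) (Fin 8) (MvPolynomial (Fin 5) k) :=
  !![0, 0,  0,  0, 0, 0, 0, 0;
     0, 0,  0,  0, 0, 0, 0, 0;
     0, 0,  0,  0, 0, 0, 0, 0;
     1, 0,  0,  0, 0, 0, 0, 0;
     0, 0,  0,  0, 0, 0, 0, 0;
     0, -1, 0,  0, 0, 0, 0, 0;
     0, 0,  -1, 0, 0, 0, 0, 0;
     0, 0,  0,  0, 1, 0, 0, 0]

/-- The null-homotopy `s = −x₄²·q`. -/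
def smat (k : Type*) [CommRing k] : Matrix (Fin 8) (Fin 8) (MvPolynomial (Fin 5) k) :=
  (-(X 4 ^ 2) : MvPolynomial (Fin 5) k) • qmat k


section Aux
variable {α : Type*} (x : α)
theorem d2 (u : Fin 7 → α) : Matrix.vecCons x u (2:Fin 8) = u 1 := rfl
theorem d3 (u : Fin 7 → α) : Matrix.vecCons x u (3:Fin 8) = u 2 := rfl
theorem d4 (u : Fin 7 → α) : Matrix.vecCons x u (4:Fin 8) = u 3 := rfl
theorem d5 (u : Fin 7 → α) : Matrix.vecCons x u (5:Fin 8) = u 4 := rfl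
theorem d6 (u : Fin 7 → α) : Matrix.vecCons x u (6:Fin 8) = u 5 := rfl
theorem d7 (u : Fin 7 → α) : Matrix.vecCons x u (7:Fin 8) = u 6 := rfl
theorem e2 (u : Fin 6 → α) : Matrix.vecCons x u (1:Fin 7) = u 0 := rfl
theorem e3 (u : Fin 6 → α) : Matrix.vecCons x u (2:Fin 7) = u 1 := rfl
theorem e4 (u : Fin 6 → α) : Matrix.vecCons x u (3:Fin 7) = u 2 := rfl
theorem e5 (u : Fin 6 → α) : Matrix.vecCons x u (4:Fin 7) = u 3 := rfl
theorem e6 (u : Fin 6 → α) : Matrix.vecCons x u (5:Fin 7) = u 4 := rfl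
theorem e7 (u : Fin 6 → α) : Matrix.vecCons x u (6:Fin 7) = u 5 := rfl
theorem f3 (u : Fin 5 → α) : Matrix.vecCons x u (1:Fin 6) = u 0 := rfl
theorem f4 (u : Fin 5 → α) : Matrix.vecCons x u (2:Fin 6) = u 1 := rfl
theorem f5 (u : Fin 5 → α) : Matrix.vecCons x u (3:Fin 6) = u 2 := rfl
theorem f6 (u : Fin 5 → α) : Matrix.vecCons x u (4:Fin 6) = u 3 := rfl
theorem f7 (u : Fin 5 → α) : Matrix.vecCons x u (5:Fin 6) = u 4 := rfl
theorem g4 (u : Fin 4 → α) : Matrix.vecCons x u (1:Fin 5) = u 0 := rfl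
theorem g5 (u : Fin 4 → α) : Matrix.vecCons x u (2:Fin 5) = u 1 := rfl
theorem g6 (u : Fin 4 → α) : Matrix.vecCons x u (3:Fin 5) = u 2 := rfl
theorem g7 (u : Fin 4 → α) : Matrix.vecCons x u (4:Fin 5) = u 3 := rfl
theorem h5 (u : Fin 3 → α) : Matrix.vecCons x u (1:Fin 4) = u 0 := rfl
theorem h6 (u : Fin 3 → α) : Matrix.vecCons x u (2:Fin 4) = u 1 := rfl
theorem h7 (u : Fin 3 → α) : Matrix.vecCons x u (3:Fin 4) = u 2 := rfl
theorem i6 (u : Fin 2 → α) : Matrix.vecCons x u (1:Fin 3) = u 0 := rfl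
theorem i7 (u : Fin 2 → α) : Matrix.vecCons x u (2:Fin 3) = u 1 := rfl
theorem j7 (u : Fin 1 → α) : Matrix.vecCons x u (1:Fin 2) = u 0 := rfl
end Aux

set_option maxHeartbeats 1000000 in
theorem gg_aux (k : Type*) [CommRing k] :
    gmat k * gmat k = (-(X 4 ^ 3) : MvPolynomial (Fin 5) k) • 1 := by
  refine Matrix.ext fun i j => ?_
  fin_cases i <;> fin_cases j <;>
    simp (config := { decide := true }) [gmat, Matrix.mul_apply, Fin.sum_univ_succ,
      Matrix.one_apply, d2, d3, d4, d5, d6, d7, e2, e3, e4, e5, e6, e7, f3, f4, f5, f6, f7,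
      g4, g5, g6, g7, h5, h6, h7, i6, i7, j7, Matrix.vecHead, Matrix.vecTail]
section Generic
variable {α : Type*} [CommRing α] (A0 A1 A2 B0 B1 B2 : α)

def Qg : Matrix (Fin 8) (Fin 8) α :=
  !![0, 0,  0,  0, 0, 0, 0, 0;
     0, 0,  0,  0, 0, 0, 0, 0;
     0, 0,  0,  0, 0, 0, 0, 0;
     1, 0,  0,  0, 0, 0, 0, 0;
     0, 0,  0,  0, 0, 0, 0, 0;
     0, -1, 0,  0, 0, 0, 0, 0;
     0, 0,  -1, 0, 0, 0, 0, 0;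
     0, 0,  0,  0, 1, 0, 0, 0]

def Pg : Matrix (Fin 8) (Fin 8) α :=
  !![0,  A0,  A1, A2, 0,   0,   0,   0;
     B0, 0,   0,  0,  -A1, -A2, 0,   0;
     B1, 0,   0,  0,  A0,  0,   -A2, 0;
     B2, 0,   0,  0,  0,   A0,  A1,  0;
     0,  -B1, B0, 0,  0,   0,   0,   A2;
     0,  -B2, 0,  B0, 0,   0,   0,   -A1;
     0,  0,   -B2, B1, 0,  0,   0,   A0;
     0,  0,   0,  0,  B2,  -B1, B0,  0]

set_option maxHeartbeats 1000000 in
theorem QPg : (Qg : Matrix (Fin 8) (Fin 8) α) * Pg A0 A1 A2 B0 B1 B2 =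
    !![0, 0, 0, 0, 0, 0, 0, 0;
       0, 0, 0, 0, 0, 0, 0, 0;
       0, 0, 0, 0, 0, 0, 0, 0;
       0, A0, A1, A2, 0, 0, 0, 0;
       0, 0, 0, 0, 0, 0, 0, 0;
       -B0, 0, 0, 0, A1, A2, 0, 0;
       -B1, 0, 0, 0, -A0, 0, A2, 0;
       0, -B1, B0, 0, 0, 0, 0, A2] := by
  refine Matrix.ext fun i j => ?_
  fin_cases i <;> fin_cases j <;>
    simp [Qg, Pg, Matrix.mul_apply, Fin.sum_univ_succ,
      d2, d3, d4, d5, d6, d7, e2, e3, e4, e5, e6, e7, f3, f4, f5, f6, f7,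
      g4, g5, g6, g7, h5, h6, h7, i6, i7, j7, Matrix.vecHead, Matrix.vecTail]

set_option maxHeartbeats 1000000 in
theorem PQg : (Pg A0 A1 A2 B0 B1 B2 : Matrix (Fin 8) (Fin 8) α) * Qg =
    !![A2, 0, 0, 0, 0, 0, 0, 0;
       0, A2, 0, 0, 0, 0, 0, 0;
       0, 0, A2, 0, 0, 0, 0, 0;
       0, -A0, -A1, 0, 0, 0, 0, 0;
       0, 0, 0, 0, A2, 0, 0, 0;
       B0, 0, 0, 0, -A1, 0, 0, 0;
       B1, 0, 0, 0, A0, 0, 0, 0;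
       0, B1, -B0, 0, 0, 0, 0, 0] := by
  refine Matrix.ext fun i j => ?_
  fin_cases i <;> fin_cases j <;>
    simp [Qg, Pg, Matrix.mul_apply, Fin.sum_univ_succ,
      d2, d3, d4, d5, d6, d7, e2, e3, e4, e5, e6, e7, f3, f4, f5, f6, f7,
      g4, g5, g6, g7, h5, h6, h7, i6, i7, j7, Matrix.vecHead, Matrix.vecTail]

set_option maxHeartbeats 1000000 in
theorem sum_g :
    (!![0, 0, 0, 0, 0, 0, 0, 0;
       0, 0, 0, 0, 0, 0, 0, 0;
       0, 0, 0, 0, 0, 0, 0, 0;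
       0, A0, A1, A2, 0, 0, 0, 0;
       0, 0, 0, 0, 0, 0, 0, 0;
       -B0, 0, 0, 0, A1, A2, 0, 0;
       -B1, 0, 0, 0, -A0, 0, A2, 0;
       0, -B1, B0, 0, 0, 0, 0, A2] : Matrix (Fin 8) (Fin 8) α) +
    !![A2, 0, 0, 0, 0, 0, 0, 0;
       0, A2, 0, 0, 0, 0, 0, 0;
       0, 0, A2, 0, 0, 0, 0, 0;
       0, -A0, -A1, 0, 0, 0, 0, 0;
       0, 0, 0, 0, A2, 0, 0, 0;
       B0, 0, 0, 0, -A1, 0, 0, 0;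
       B1, 0, 0, 0, A0, 0, 0, 0;
       0, B1, -B0, 0, 0, 0, 0, 0] = A2 • 1 := by
  refine Matrix.ext fun i j => ?_
  fin_cases i <;> fin_cases j <;>
    simp (config := { decide := true }) [Matrix.one_apply,
      d2, d3, d4, d5, d6, d7, e2, e3, e4, e5, e6, e7, f3, f4, f5, f6, f7,
      g4, g5, g6, g7, h5, h6, h7, i6, i7, j7, Matrix.vecHead, Matrix.vecTail]

theorem qp_spec' : (Qg : Matrix (Fin 8) (Fin 8) α) * Pg A0 A1 A2 B0 B1 B2 +
    Pg A0 A1 A2 B0 B1 B2 * Qg = A2 • 1 := by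
  rw [QPg, PQg, sum_g]

end Generic

theorem qp_spec (k : Type*) [CommRing k] :
    qmat k * pmat k + pmat k * qmat k = (X 4 : MvPolynomial (Fin 5) k) • 1 :=
  qp_spec' (a0 k) (a1 k) (a2 k) (b0 k) (b1 k) (b2 k)


theorem stmt12 (k : Type*) [CommRing k] :
    gmat k * gmat k = smat k * pmat k + pmat k * smat k := by
  rw [gg_aux, smat, Matrix.smul_mul, Matrix.mul_smul, ← smul_add, qp_spec, smul_smul]
  congr 1
  ring

end
end
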